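/- arXiv:2309.02606 — 5 statements merged into one kernel-verified Lean document; each statement's English description precedes it below -/
import Mathlib

section
/- Let p be a pdf on ℝ^l, let ℓ : ℝ^l → [0,∞) be measurable with Z = ∫ ℓ(θ) p(θ) dθ ∈ (0,∞). Let q be a pdf on ℝ^l with q(θ) = 0 for almost every θ with p(θ) = 0, and suppose θ ↦ q(θ) log ℓ(θ) and θ ↦ q(θ) log(q(θ)/p(θ)) are Lebesgue integrable. Then the evidence lower bound holds: log Z ≥ ∫ q(θ) log ℓ(θ) dθ − KL(q‖p). -/
open MeasureTheory

/-- the evidence lower bound `log Z ≥ ∫ q log ℓ − KL(q‖p)`.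
The hypothesis `hqℓ` encodes the a.e. finiteness part of the Lebesgue
integrability of `θ ↦ q θ * log (ℓ θ)` (where `log 0 = −∞`), which a
real-valued `Integrable` statement cannot express. -/
theorem stmt_1 (l : ℕ) (p ℓ q : (Fin l → ℝ) → ℝ)
    (hp_meas : Measurable p) (hp_nonneg : ∀ θ, 0 ≤ p θ)
    (hp_int : ∫ θ, p θ = 1)
    (hℓ_meas : Measurable ℓ) (hℓ_nonneg : ∀ θ, 0 ≤ ℓ θ)
    (Z : ℝ) (hZ : Z = ∫ θ, ℓ θ * p θ)
    (hZ_pos : 0 < Z) (hZ_fin : Integrable (fun θ => ℓ θ * p θ))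
    (hq_meas : Measurable q) (hq_nonneg : ∀ θ, 0 ≤ q θ)
    (hq_int : ∫ θ, q θ = 1)
    (hq0 : ∀ᵐ (θ : Fin l → ℝ) ∂volume, p θ = 0 → q θ = 0)
    (hqℓ : ∀ᵐ (θ : Fin l → ℝ) ∂volume, ℓ θ = 0 → q θ = 0)
    (h1 : Integrable (fun θ => q θ * Real.log (ℓ θ)))
    (h2 : Integrable (fun θ => q θ * Real.log (q θ / p θ))) :
    Real.log Z ≥
      (∫ θ, q θ * Real.log (ℓ θ)) - (∫ θ, q θ * Real.log (q θ / p θ)) := by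
  -- `q` is integrable since its integral is `1 ≠ 0`.
  have hq_integrable : Integrable q := by
    by_contra h
    rw [integral_undef h] at hq_int
    norm_num at hq_int
  -- The auxiliary function F = q * (ℓ p / q), i.e. ℓ p where q > 0.
  set F : (Fin l → ℝ) → ℝ := fun θ => if q θ = 0 then 0 else ℓ θ * p θ with hF_def
  have hF_meas : Measurable F :=
    Measurable.ite (hq_meas (measurableSet_singleton 0)) measurable_const
      (hℓ_meas.mul hp_meas)
  have hF_nonneg : ∀ θ, 0 ≤ F θ := by
    intro θ
    by_cases h : q θ = 0 <;> simp [hF_def, h, mul_nonneg (hℓ_nonneg θ) (hp_nonneg θ)]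
  have hF_le : ∀ θ, F θ ≤ ℓ θ * p θ := by
    intro θ
    by_cases h : q θ = 0 <;> simp [hF_def, h, mul_nonneg (hℓ_nonneg θ) (hp_nonneg θ)]
  have hF_int : Integrable F := by
    refine hZ_fin.mono hF_meas.aestronglyMeasurable (Filter.Eventually.of_forall ?_)
    intro θ
    rw [Real.norm_eq_abs, Real.norm_eq_abs, abs_of_nonneg (hF_nonneg θ),
      abs_of_nonneg (mul_nonneg (hℓ_nonneg θ) (hp_nonneg θ))]
    exact hF_le θ
  set c : ℝ := ∫ θ, F θ with hc_def
  -- c ≤ Z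
  have hcZ : c ≤ Z := by
    rw [hZ]
    exact integral_mono hF_int hZ_fin hF_le
  -- c > 0
  have hc_pos : 0 < c := by
    rcases (integral_nonneg (f := F) hF_nonneg).lt_or_eq with h | h
    · exact h
    · exfalso
      have hF0 : F =ᵐ[volume] 0 := by
        have := (integral_eq_zero_iff_of_nonneg hF_nonneg hF_int).mp h.symm
        exact this
      have hq0' : q =ᵐ[volume] 0 := by
        filter_upwards [hF0, hq0, hqℓ] with θ hθF hθp hθℓ
        by_contra hq
        have hqpos : 0 < q θ := lt_of_le_of_ne (hq_nonneg θ) (Ne.symm hq)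
        have hp' : p θ ≠ 0 := fun h => hq (hθp h)
        have hℓ' : ℓ θ ≠ 0 := fun h => hq (hθℓ h)
        have : F θ = ℓ θ * p θ := by simp [hF_def, ne_of_gt hqpos]
        rw [Pi.zero_apply] at hθF
        have : ℓ θ * p θ = 0 := by rw [← this]; exact hθF
        rcases mul_eq_zero.mp this with h' | h'
        · exact hℓ' h'
        · exact hp' h'
      have : (∫ θ, q θ) = 0 := by
        rw [integral_congr_ae hq0']
        simp
      rw [hq_int] at this
      norm_num at this
  -- Pointwise a.e. bound: q log ℓ − q log(q/p) ≤ F/c − q + q log c.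
  have key : ∀ᵐ θ ∂volume,
      q θ * Real.log (ℓ θ) - q θ * Real.log (q θ / p θ)
        ≤ F θ / c - q θ + q θ * Real.log c := by
    filter_upwards [hq0, hqℓ] with θ hθp hθℓ
    by_cases hq : q θ = 0
    · simp [hF_def, hq]
    · have hqpos : 0 < q θ := lt_of_le_of_ne (hq_nonneg θ) (Ne.symm hq)
      have hppos : 0 < p θ := lt_of_le_of_ne (hp_nonneg θ) (fun h => hq (hθp h.symm))
      have hℓpos : 0 < ℓ θ := lt_of_le_of_ne (hℓ_nonneg θ) (fun h => hq (hθℓ h.symm))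
      have hF : F θ = ℓ θ * p θ := by simp [hF_def, hq]
      set t : ℝ := ℓ θ * p θ / q θ with ht_def
      have htpos : 0 < t := div_pos (mul_pos hℓpos hppos) hqpos
      have htangent : Real.log t - Real.log c ≤ t / c - 1 := by
        have := Real.log_le_sub_one_of_pos (div_pos htpos hc_pos)
        rwa [Real.log_div (ne_of_gt htpos) (ne_of_gt hc_pos)] at this
      have hlogt : Real.log t = Real.log (ℓ θ) - Real.log (q θ / p θ) := by
        rw [ht_def, Real.log_div (ne_of_gt (mul_pos hℓpos hppos)) (ne_of_gt hqpos),
          Real.log_mul (ne_of_gt hℓpos) (ne_of_gt hppos),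
          Real.log_div (ne_of_gt hqpos) (ne_of_gt hppos)]
        ring
      have hmul := mul_le_mul_of_nonneg_left htangent (hq_nonneg θ)
      have hqt : q θ * (t / c) = F θ / c := by
        rw [hF, ht_def]
        field_simp
      calc q θ * Real.log (ℓ θ) - q θ * Real.log (q θ / p θ)
          = q θ * (Real.log t - Real.log c) + q θ * Real.log c := by
            rw [hlogt]; ring
        _ ≤ q θ * (t / c - 1) + q θ * Real.log c := by linarith
        _ = F θ / c - q θ + q θ * Real.log c := by rw [mul_sub, mul_one, hqt]
  -- Integrate the pointwise bound.
  have hlhs_int : Integrable (fun θ =>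
      q θ * Real.log (ℓ θ) - q θ * Real.log (q θ / p θ)) := h1.sub h2
  have hrhs_int : Integrable (fun θ => F θ / c - q θ + q θ * Real.log c) :=
    ((hF_int.div_const c).sub hq_integrable).add (hq_integrable.mul_const _)
  have hint := integral_mono_ae hlhs_int hrhs_int key
  rw [integral_sub h1 h2] at hint
  have hA : Integrable (fun θ => F θ / c - q θ) :=
    (hF_int.div_const c).sub hq_integrable
  have hrhs_val : (∫ θ, (F θ / c - q θ + q θ * Real.log c)) = Real.log c := by
    rw [integral_add hA (hq_integrable.mul_const _),
      integral_sub (hF_int.div_const c) hq_integrable, integral_div, integral_mul_const,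
      hq_int, ← hc_def, div_self (ne_of_gt hc_pos)]
    ring
  rw [hrhs_val] at hint
  exact le_trans hint (Real.log_le_log hc_pos hcZ)
end

section
/- Let p_1,…,p_n be pdfs on ℝ^l that are strictly positive everywhere, let ℓ_1,…,ℓ_n : ℝ^l → [0,∞) be measurable likelihood functions, and let A ∈ ℝ^{n×n} be a doubly stochastic matrix. Set K = ∫ ∏_{i=1}^n p_i(θ)^{1/n} dθ and N = ∫ ∏_{i=1}^n ℓ_i(θ) · ∏_{i=1}^n p_i(θ)^{1/n} dθ, and assume K, N ∈ (0,∞). Let q be a pdf on ℝ^l such that θ ↦ q(θ) log ℓ_i(θ) and θ ↦ q(θ) log(q(θ)/p_j(θ)) are Lebesgue integrable for all i, j. Then the distributed evidence lower bound (DELBO) holds: log(N/K) ≥ ∑_{i=1}^n [ ∫ q(θ) log ℓ_i(θ) dθ − (1/n) ∑_{j=1}^n A_{ij} ∫ q(θ) log(q(θ)/p_j(θ)) dθ ]. -/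
open MeasureTheory

/-- the distributed evidence lower bound (DELBO).
`K = ∫ ∏ᵢ pᵢ^{1/n}`, `N = ∫ (∏ᵢ ℓᵢ)·(∏ᵢ pᵢ^{1/n})`, `A` doubly stochastic.
The hypothesis `hqℓ` encodes the a.e. finiteness part of the Lebesgue
integrability of `θ ↦ q θ * log (ℓᵢ θ)` (where `log 0 = −∞`). -/
theorem stmt_3 (l n : ℕ) (p ℓ : Fin n → (Fin l → ℝ) → ℝ)
    (hp_meas : ∀ i, Measurable (p i)) (hp_pos : ∀ i θ, 0 < p i θ)
    (hp_int : ∀ i, ∫ θ, p i θ = 1)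
    (hℓ_meas : ∀ i, Measurable (ℓ i)) (hℓ_nonneg : ∀ i θ, 0 ≤ ℓ i θ)
    (A : Matrix (Fin n) (Fin n) ℝ)
    (hA_nonneg : ∀ i j, 0 ≤ A i j)
    (hA_row : ∀ i, ∑ j, A i j = 1) (hA_col : ∀ j, ∑ i, A i j = 1)
    (K N : ℝ)
    (hK : K = ∫ θ, ∏ i, p i θ ^ (1 / (n : ℝ)))
    (hN : N = ∫ θ, (∏ i, ℓ i θ) * ∏ i, p i θ ^ (1 / (n : ℝ)))
    (hK_pos : 0 < K) (hN_pos : 0 < N)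
    (hK_fin : Integrable (fun θ => ∏ i, p i θ ^ (1 / (n : ℝ))))
    (hN_fin : Integrable (fun θ => (∏ i, ℓ i θ) * ∏ i, p i θ ^ (1 / (n : ℝ))))
    (q : (Fin l → ℝ) → ℝ)
    (hq_meas : Measurable q) (hq_nonneg : ∀ θ, 0 ≤ q θ)
    (hq_int : ∫ θ, q θ = 1)
    (hqℓ : ∀ i, ∀ᵐ (θ : Fin l → ℝ) ∂volume, ℓ i θ = 0 → q θ = 0)
    (h1 : ∀ i, Integrable (fun θ => q θ * Real.log (ℓ i θ)))
    (h2 : ∀ j, Integrable (fun θ => q θ * Real.log (q θ / p j θ))) :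
    Real.log (N / K) ≥
      ∑ i, ((∫ θ, q θ * Real.log (ℓ i θ))
        - (1 / (n : ℝ)) * ∑ j, A i j * ∫ θ, q θ * Real.log (q θ / p j θ)) := by
  rcases Nat.eq_zero_or_pos n with hn | hn
  · subst hn
    have hNK : N = K := by rw [hN, hK]; simp
    simp [hNK, div_self hK_pos.ne']
  have hnR : (0 : ℝ) < n := by exact_mod_cast hn
  -- integrability of p i and q
  have hp_intg : ∀ i, Integrable (p i) := by
    intro i
    by_contra h
    simpa [integral_undef h] using hp_int i
  have hq_intg : Integrable q := by
    by_contra h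
    simpa [integral_undef h] using hq_int
  -- Step B : simplify the RHS using column stochasticity
  set E : Fin n → ℝ := fun i => ∫ θ, q θ * Real.log (ℓ i θ) with hE
  set D : Fin n → ℝ := fun j => ∫ θ, q θ * Real.log (q θ / p j θ) with hD
  have hRHS : ∑ i, (E i - (1 / (n : ℝ)) * ∑ j, A i j * D j)
      = (∑ i, E i) - (1 / (n : ℝ)) * ∑ j, D j := by
    rw [Finset.sum_sub_distrib, ← Finset.mul_sum, Finset.sum_comm]
    congr 2
    refine Finset.sum_congr rfl fun j _ => ?_
    rw [← Finset.sum_mul, hA_col j, one_mul]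
  -- Step D : K ≤ 1 by AM-GM
  have hK1 : K ≤ 1 := by
    have hmono : (∫ θ, ∏ i, p i θ ^ (1 / (n : ℝ)))
        ≤ ∫ θ, ∑ i, (1 / (n : ℝ)) * p i θ := by
      refine integral_mono hK_fin (integrable_finset_sum _ fun i _ =>
        (hp_intg i).const_mul _) fun θ => ?_
      refine Real.geom_mean_le_arith_mean_weighted _ _ _
        (fun i _ => by positivity) ?_ (fun i _ => (hp_pos i θ).le)
      simp [Finset.sum_const]
      field_simp
    have : (∫ θ, ∑ i, (1 / (n : ℝ)) * p i θ) = 1 := by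
      rw [integral_finset_sum _ fun i _ => (hp_intg i).const_mul _]
      simp only [integral_const_mul, hp_int, mul_one]
      simp [Finset.sum_const]
      field_simp
    rw [hK]
    exact hmono.trans this.le
  -- Step C : the Gibbs inequality
  set g : (Fin l → ℝ) → ℝ :=
    fun θ => (∏ i, ℓ i θ) * ∏ i, p i θ ^ (1 / (n : ℝ)) with hg
  have hg_nonneg : ∀ θ, 0 ≤ g θ := fun θ =>
    mul_nonneg (Finset.prod_nonneg fun i _ => hℓ_nonneg i θ)
      (Finset.prod_nonneg fun i _ => (Real.rpow_nonneg (hp_pos i θ).le _))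
  set S : (Fin l → ℝ) → ℝ :=
    fun θ => (∑ i, q θ * Real.log (ℓ i θ))
      - (1 / (n : ℝ)) * ∑ j, q θ * Real.log (q θ / p j θ) with hS
  have hS_int : Integrable S :=
    (integrable_finset_sum _ fun i _ => h1 i).sub
      ((integrable_finset_sum _ fun j _ => h2 j).const_mul _)
  have hS_val : ∫ θ, S θ = (∑ i, E i) - (1 / (n : ℝ)) * ∑ j, D j := by
    rw [hS]
    rw [integral_sub (integrable_finset_sum _ fun i _ => h1 i)
      ((integrable_finset_sum _ fun j _ => h2 j).const_mul _),
      integral_finset_sum _ fun i _ => h1 i,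
      integral_const_mul, integral_finset_sum _ fun j _ => h2 j]
  -- a.e. pointwise bound : S θ - q θ * log N ≤ g θ / N - q θ
  have hae : ∀ᵐ θ ∂(volume : Measure (Fin l → ℝ)),
      S θ - q θ * Real.log N ≤ g θ / N - q θ := by
    have hall : ∀ᵐ θ ∂(volume : Measure (Fin l → ℝ)),
        ∀ i, ℓ i θ = 0 → q θ = 0 := ae_all_iff.2 hqℓ
    filter_upwards [hall] with θ hθ
    by_cases hq0 : q θ = 0
    · have : S θ = 0 := by simp [hS, hq0]
      rw [this, hq0]
      simp only [zero_mul, sub_zero, sub_self, zero_sub, sub_zero]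
      have := div_nonneg (hg_nonneg θ) hN_pos.le
      linarith
    · have hqpos : 0 < q θ := (hq_nonneg θ).lt_of_ne' hq0
      have hℓpos : ∀ i, 0 < ℓ i θ := fun i =>
        (hℓ_nonneg i θ).lt_of_ne' fun h => hq0 (hθ i h)
      have hgpos : 0 < g θ :=
        mul_pos (Finset.prod_pos fun i _ => hℓpos i)
          (Finset.prod_pos fun i _ => Real.rpow_pos_of_pos (hp_pos i θ) _)
      have hSval : S θ = q θ * Real.log (g θ / q θ) := by
        have h1' : ∑ i, q θ * Real.log (ℓ i θ)
            = q θ * Real.log (∏ i, ℓ i θ) := by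
          rw [← Finset.mul_sum, Real.log_prod fun i _ => (hℓpos i).ne']
        have hterm : ∀ j : Fin n, q θ * Real.log (q θ / p j θ)
            = q θ * Real.log (q θ) - q θ * Real.log (p j θ) := fun j => by
          rw [Real.log_div hq0 (hp_pos j θ).ne', mul_sub]
        have hsum : ∑ j, q θ * Real.log (q θ / p j θ)
            = (n : ℝ) * (q θ * Real.log (q θ)) - ∑ j, q θ * Real.log (p j θ) := by
          simp only [hterm]
          rw [Finset.sum_sub_distrib, Finset.sum_const, Finset.card_univ,
            Fintype.card_fin, nsmul_eq_mul]
        have hlogprod : Real.log (∏ i, p i θ ^ (1 / (n : ℝ)))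
            = (1 / (n : ℝ)) * ∑ j, Real.log (p j θ) := by
          rw [Real.log_prod fun i _ =>
            (Real.rpow_pos_of_pos (hp_pos i θ) _).ne']
          simp only [Real.log_rpow (hp_pos _ θ)]
          rw [Finset.mul_sum]
        have h2' : (1 / (n : ℝ)) * ∑ j, q θ * Real.log (q θ / p j θ)
            = q θ * Real.log (q θ) - q θ * Real.log (∏ i, p i θ ^ (1 / (n : ℝ))) := by
          rw [hsum, hlogprod, ← Finset.mul_sum]
          have hne : (n : ℝ) ≠ 0 := hnR.ne'
          field_simp
        simp only [hS]
        rw [h1', h2', Real.log_div hgpos.ne' hq0, hg,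
          Real.log_mul (Finset.prod_pos fun i _ => hℓpos i).ne'
            (Finset.prod_pos fun i _ =>
              Real.rpow_pos_of_pos (hp_pos i θ) _).ne']
        ring
      have hx : 0 < g θ / (N * q θ) := by positivity
      have hlog : Real.log (g θ / (N * q θ)) ≤ g θ / (N * q θ) - 1 :=
        Real.log_le_sub_one_of_pos hx
      have key : q θ * Real.log (g θ / (N * q θ)) ≤ g θ / N - q θ := by
        have := mul_le_mul_of_nonneg_left hlog hqpos.le
        calc q θ * Real.log (g θ / (N * q θ))
            ≤ q θ * (g θ / (N * q θ) - 1) := this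
          _ = g θ / N - q θ := by field_simp
      calc S θ - q θ * Real.log N
          = q θ * Real.log (g θ / (N * q θ)) := by
            rw [hSval, Real.log_div hgpos.ne' (by positivity : N * q θ ≠ 0),
              Real.log_mul hN_pos.ne' hq0, Real.log_div hgpos.ne' hq0]
            ring
        _ ≤ g θ / N - q θ := key
  -- integrate the pointwise bound
  have hint : ∫ θ, (S θ - q θ * Real.log N) ≤ ∫ θ, (g θ / N - q θ) := by
    refine integral_mono_ae (hS_int.sub (hq_intg.mul_const _))
      ((hN_fin.div_const N).sub hq_intg) hae
  have hlhs : ∫ θ, (S θ - q θ * Real.log N) = (∫ θ, S θ) - Real.log N := by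
    rw [integral_sub hS_int (hq_intg.mul_const _), integral_mul_const, hq_int,
      one_mul]
  have hrhs : ∫ θ, (g θ / N - q θ) = 0 := by
    rw [integral_sub (hN_fin.div_const N) hq_intg, integral_div, ← hg, ← hN,
      hq_int, div_self hN_pos.ne', sub_self]
  have hSN : ∫ θ, S θ ≤ Real.log N := by
    have := hint
    rw [hlhs, hrhs] at this
    linarith
  -- conclude
  rw [ge_iff_le, hRHS, ← hS_val,
    Real.log_div hN_pos.ne' hK_pos.ne']
  have hlogK : Real.log K ≤ 0 := Real.log_nonpos hK_pos.le hK1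
  linarith
end

section
/- Let p_1,…,p_n be pdfs on ℝ^l that are strictly positive everywhere, set K = ∫ ∏_{i=1}^n p_i(θ)^{1/n} dθ and assume K ∈ (0,∞). Define the normalized geometric average p_g(θ) = ∏_{i=1}^n p_i(θ)^{1/n} / K, and assume θ ↦ p_g(θ) log(p_g(θ)/p_i(θ)) is Lebesgue integrable for every i. Then the consensus error satisfies (1/n) ∑_{i=1}^n KL(p_g‖p_i) = − log K. -/
open MeasureTheory

/-- the consensus error satisfies
`(1/n) ∑ᵢ KL(p_g‖pᵢ) = −log K`, where `p_g = ∏ᵢ pᵢ^{1/n}/K` is the normalized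
geometric average of strictly positive pdfs and `K` its normalization. -/
theorem stmt_6 (l n : ℕ) (p : Fin n → (Fin l → ℝ) → ℝ)
    (hp_meas : ∀ i, Measurable (p i)) (hp_pos : ∀ i θ, 0 < p i θ)
    (hp_int : ∀ i, ∫ θ, p i θ = 1)
    (K : ℝ) (hK : K = ∫ θ, ∏ i, p i θ ^ (1 / (n : ℝ)))
    (hK_pos : 0 < K)
    (hK_fin : Integrable (fun θ => ∏ i, p i θ ^ (1 / (n : ℝ))))
    (pg : (Fin l → ℝ) → ℝ)
    (hpg : ∀ θ, pg θ = (∏ i, p i θ ^ (1 / (n : ℝ))) / K)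
    (hint : ∀ i, Integrable (fun θ => pg θ * Real.log (pg θ / p i θ))) :
    (1 / (n : ℝ)) * ∑ i, ∫ θ, pg θ * Real.log (pg θ / p i θ) = - Real.log K := by
  rcases Nat.eq_zero_or_pos n with hn | hn
  · subst hn
    have hvol : K = (volume (Set.univ : Set (Fin l → ℝ))).toReal := by
      rw [hK]
      simp only [Finset.univ_eq_empty, Finset.prod_empty, integral_const, measureReal_def, smul_eq_mul, mul_one]
    rcases Nat.eq_zero_or_pos l with hl | hl
    · subst hl
      have h1 : (volume (Set.univ : Set (Fin 0 → ℝ))) = 1 := by rw [volume_pi, Measure.pi_univ]; simp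
      rw [h1] at hvol
      simp [hvol]
    · exfalso
      have htop : volume (Set.univ : Set (Fin l → ℝ)) = ⊤ := by
        rw [volume_pi, Measure.pi_univ]
        simp [Real.volume_univ, Finset.prod_const, ENNReal.top_pow hl.ne']
      rw [htop] at hvol
      simp [hvol] at hK_pos
  · have hn0 : (n : ℝ) ≠ 0 := Nat.cast_ne_zero.mpr hn.ne'
    have hprod_pos : ∀ θ, 0 < ∏ i, p i θ ^ (1 / (n : ℝ)) := fun θ =>
      Finset.prod_pos fun i _ => Real.rpow_pos_of_pos (hp_pos i θ) _
    have hpg_pos : ∀ θ, 0 < pg θ := fun θ => by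
      rw [hpg]; exact div_pos (hprod_pos θ) hK_pos
    have hpg_one : ∫ θ, pg θ = 1 := by
      have h : (fun θ => pg θ) = fun θ => (∏ i, p i θ ^ (1 / (n : ℝ))) / K := funext hpg
      rw [h, integral_div, ← hK, div_self hK_pos.ne']
    have key : ∀ θ, ∑ i, pg θ * Real.log (pg θ / p i θ)
        = (-(n : ℝ) * Real.log K) * pg θ := by
      intro θ
      have hlogpg : Real.log (pg θ)
          = (1 / (n : ℝ)) * ∑ i, Real.log (p i θ) - Real.log K := by
        rw [hpg θ, Real.log_div (hprod_pos θ).ne' hK_pos.ne',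
          Real.log_prod (fun i _ => (Real.rpow_pos_of_pos (hp_pos i θ) _).ne')]
        congr 1
        rw [Finset.mul_sum]
        exact Finset.sum_congr rfl fun i _ => Real.log_rpow (hp_pos i θ) _
      calc ∑ i, pg θ * Real.log (pg θ / p i θ)
          = pg θ * ∑ i, (Real.log (pg θ) - Real.log (p i θ)) := by
            rw [Finset.mul_sum]
            exact Finset.sum_congr rfl fun i _ => by
              rw [Real.log_div (hpg_pos θ).ne' (hp_pos i θ).ne']
        _ = (-(n : ℝ) * Real.log K) * pg θ := by
            rw [Finset.sum_sub_distrib, Finset.sum_const, Finset.card_univ,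
              Fintype.card_fin, nsmul_eq_mul, hlogpg]
            field_simp
            ring
    rw [← integral_finset_sum _ fun i _ => hint i]
    simp_rw [key]
    rw [integral_const_mul, hpg_one, mul_one]
    field_simp
end

section
/- Let p_1,…,p_n be pdfs on ℝ^l that are strictly positive everywhere. Then ∫ ∏_{i=1}^n p_i(θ)^{1/n} dθ = 1 if and only if p_1 = p_2 = ⋯ = p_n almost everywhere. -/
open MeasureTheory

/-- the equally-weighted geometric average of strictly positive
pdfs integrates to one if and only if all the pdfs agree almost everywhere. -/
theorem stmt_7 (l n : ℕ) (hn : 1 ≤ n) (p : Fin n → (Fin l → ℝ) → ℝ)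
    (hp_meas : ∀ i, Measurable (p i)) (hp_pos : ∀ i θ, 0 < p i θ)
    (hp_int : ∀ i, ∫ θ, p i θ = 1) :
    (∫ θ, ∏ i, p i θ ^ (1 / (n : ℝ))) = 1 ↔
      ∀ i j, p i =ᵐ[(volume : Measure (Fin l → ℝ))] p j := by
  have hn0 : (n : ℝ) ≠ 0 := by positivity
  have hw : ∑ _i : Fin n, (1 / (n : ℝ)) = 1 := by
    simp [Finset.sum_const, Finset.card_univ]
    field_simp
  set g : (Fin l → ℝ) → ℝ := fun θ => ∏ i, p i θ ^ (1 / (n : ℝ)) with hg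
  set f : (Fin l → ℝ) → ℝ := fun θ => ∑ i, (1 / (n : ℝ)) * p i θ with hf
  have hgle : ∀ θ, g θ ≤ f θ := fun θ =>
    Real.geom_mean_le_arith_mean_weighted Finset.univ (fun _ => 1 / (n : ℝ))
      (fun i => p i θ) (fun i _ => by positivity) hw (fun i _ => (hp_pos i θ).le)
  have hpi_int : ∀ i, Integrable (p i) := by
    intro i
    by_contra h
    have h1 := hp_int i
    rw [integral_undef h] at h1
    exact one_ne_zero h1.symm
  have hf_int : Integrable f := by
    apply integrable_finset_sum
    intro i _
    exact ((hpi_int i).const_mul _)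
  have hf_integral : ∫ θ, f θ = 1 := by
    rw [hf]
    rw [integral_finset_sum _ (fun i _ => (hpi_int i).const_mul _)]
    simp only [integral_const_mul, hp_int, mul_one]
    exact hw
  have hg_meas : Measurable g := by
    apply Finset.measurable_prod
    intro i _
    exact (hp_meas i).pow_const _
  have hg_nonneg : ∀ θ, 0 ≤ g θ := fun θ =>
    Finset.prod_nonneg fun i _ => Real.rpow_nonneg (hp_pos i θ).le _
  have hg_int : Integrable g := by
    refine Integrable.mono' hf_int hg_meas.aestronglyMeasurable ?_
    filter_upwards with θ
    rw [Real.norm_of_nonneg (hg_nonneg θ)]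
    exact hgle θ
  constructor
  · intro hint i j
    -- f - g is nonneg, integrable, with integral 0
    have hsub : ∫ θ, (f θ - g θ) = 0 := by
      rw [integral_sub hf_int hg_int, hf_integral, hint, sub_self]
    have h0 : (fun θ => f θ - g θ) =ᵐ[(volume : Measure (Fin l → ℝ))] 0 := by
      rw [← integral_eq_zero_iff_of_nonneg (fun θ => sub_nonneg.2 (hgle θ))
        (hf_int.sub hg_int)]
      exact hsub
    filter_upwards [h0] with θ hθ
    simp only [Pi.zero_apply, sub_eq_zero] at hθ
    -- equality case in AM-GM, via strict concavity of log
    by_contra hne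
    have hmem : ∀ i ∈ Finset.univ, p i θ ∈ Set.Ioi (0 : ℝ) := fun i _ => hp_pos i θ
    have hlt := strictConcaveOn_log_Ioi.lt_map_sum
      (w := fun _ : Fin n => 1 / (n : ℝ)) (p := fun i => p i θ) (t := Finset.univ)
      (fun i _ => by positivity) hw hmem
      ⟨i, Finset.mem_univ i, j, Finset.mem_univ j, hne⟩
    have hlogg : Real.log (g θ) = ∑ i, (1 / (n : ℝ)) * Real.log (p i θ) := by
      rw [hg, Real.log_prod (fun i _ => (Real.rpow_pos_of_pos (hp_pos i θ) _).ne')]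
      exact Finset.sum_congr rfl fun i _ => Real.log_rpow (hp_pos i θ) _
    simp only [smul_eq_mul] at hlt
    have heq : (∑ x : Fin n, 1 / (n : ℝ) * p x θ) = f θ := rfl
    rw [← hlogg, heq, hθ] at hlt
    exact lt_irrefl _ hlt
  · intro hae
    have hall : ∀ᵐ θ ∂(volume : Measure (Fin l → ℝ)), ∀ i, p i θ = p ⟨0, hn⟩ θ := by
      rw [ae_all_iff]
      intro i
      exact hae i ⟨0, hn⟩
    have : ∫ θ, g θ = ∫ θ, p ⟨0, hn⟩ θ := by
      apply integral_congr_ae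
      filter_upwards [hall] with θ hθ
      show ∏ i, p i θ ^ (1 / (n : ℝ)) = p ⟨0, hn⟩ θ
      have : ∏ i, p i θ ^ (1 / (n : ℝ)) = ∏ _i : Fin n, p ⟨0, hn⟩ θ ^ (1 / (n : ℝ)) :=
        Finset.prod_congr rfl fun i _ => by rw [hθ i]
      rw [this, Finset.prod_const, Finset.card_univ, Fintype.card_fin,
        ← Real.rpow_natCast (p ⟨0, hn⟩ θ ^ (1 / (n : ℝ))) n,
        ← Real.rpow_mul (hp_pos _ θ).le]
      field_simp
      exact Real.rpow_one _
    exact this.trans (hp_int _)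
end

section
/- Let m ∈ ℝ, s > 0, and ξ ∈ ℝ, and let Γ denote the standard normal cumulative distribution function. Then ∫_ℝ Γ(ξ u) · (2π s²)^{-1/2} exp(−(u−m)²/(2s²)) du = Γ( ξ m / √(1 + ξ² s²) ). In other words, the expectation of the inverse probit function u ↦ Γ(ξ u) under a Gaussian distribution with mean m and variance s² is Γ(ξ m/√(1+ξ²s²)). -/
open MeasureTheory Set Real

/-- Integrability of a shifted Gaussian. -/
lemma gauss_integrable {v : ℝ} (hv : 0 < v) (c : ℝ) :
    Integrable (fun u : ℝ => Real.exp (-((u - c) ^ 2) / (2 * v))) := by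
  have base : Integrable (fun t : ℝ => Real.exp (-(1 / (2 * v)) * t ^ 2)) :=
    integrable_exp_neg_mul_sq (by positivity)
  have h := base.comp_sub_right c
  refine h.congr (Filter.Eventually.of_forall fun u => ?_)
  simp only
  congr 1
  field_simp

/-- Normalization of a shifted Gaussian integral. -/
lemma gauss_norm {v : ℝ} (hv : 0 < v) (c : ℝ) :
    ∫ u : ℝ, Real.exp (-((u - c) ^ 2) / (2 * v)) = Real.sqrt (2 * Real.pi * v) := by
  calc ∫ u : ℝ, Real.exp (-((u - c) ^ 2) / (2 * v))
      = ∫ u : ℝ, (fun t : ℝ => Real.exp (-(1 / (2 * v)) * t ^ 2)) (u - c) := by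
        congr 1; funext u; simp only; congr 1; field_simp
    _ = ∫ u : ℝ, Real.exp (-(1 / (2 * v)) * u ^ 2) :=
        integral_sub_right_eq_self (μ := volume) (fun t : ℝ => Real.exp (-(1 / (2 * v)) * t ^ 2)) c
    _ = Real.sqrt (Real.pi / (1 / (2 * v))) := integral_gaussian _
    _ = Real.sqrt (2 * Real.pi * v) := by congr 1; field_simp

/-- Translation for `Iic` set integrals. -/
lemma trans_Iic (f : ℝ → ℝ) (a : ℝ) :
    ∫ x in Iic (0 : ℝ), f (a + x) = ∫ t in Iic a, f t := by
  have A : MeasurableEmbedding fun x : ℝ => x + a :=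
    (Homeomorph.addRight a).isClosedEmbedding.measurableEmbedding
  have h := MeasurableEmbedding.setIntegral_map (μ := volume) A f (Iic a)
  rw [map_add_right_eq_self volume a] at h
  rw [h, preimage_add_const_Iic, sub_self]
  exact setIntegral_congr_fun measurableSet_Iic fun x _ => by rw [add_comm]

/-- Reflection + translation for set integrals. -/
lemma aux_shift_neg (f : ℝ → ℝ) (a : ℝ) :
    ∫ x in Ioi (0 : ℝ), f (a - x) = ∫ t in Iic a, f t := by
  have h1 : (∫ x in Ioi (0 : ℝ), f (a - x))
      = ∫ x in Ioi (0 : ℝ), (fun y => f (a + y)) (-x) := by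
    refine setIntegral_congr_fun measurableSet_Ioi fun x _ => ?_
    exact congrArg f (sub_eq_add_neg a x)
  rw [h1]
  refine (integral_comp_neg_Ioi 0 (fun y => f (a + y))).trans ?_
  rw [neg_zero, trans_Iic]

/-- Key substitution lemma: `∫_{w>0} f(a - bw) dw = b⁻¹ ∫_{t ≤ a} f`. -/
lemma key_subst (f : ℝ → ℝ) (a : ℝ) {b : ℝ} (hb : 0 < b) :
    ∫ w in Ioi (0 : ℝ), f (a - b * w) = b⁻¹ * ∫ t in Iic a, f t := by
  have := integral_comp_mul_left_Ioi (fun x => f (a - x)) 0 hb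
  simp only [mul_zero, smul_eq_mul] at this
  rw [this, aux_shift_neg]

/-- the expectation of the inverse probit function `u ↦ Γ(ξu)`
(with `Γ` the standard normal cdf) under a Gaussian with mean `m` and
variance `s²` equals `Γ(ξm/√(1+ξ²s²))`. -/
theorem stmt_9 (m s ξ : ℝ) (hs : 0 < s)
    (Γ : ℝ → ℝ)
    (hΓ : ∀ x, Γ x = ∫ t in Set.Iic x, Real.exp (-(t ^ 2) / 2) / Real.sqrt (2 * Real.pi)) :
    (∫ u, Γ (ξ * u) *
        (Real.exp (-((u - m) ^ 2) / (2 * s ^ 2)) / Real.sqrt (2 * Real.pi * s ^ 2)))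
      = Γ (ξ * m / Real.sqrt (1 + ξ ^ 2 * s ^ 2)) := by
  set φ : ℝ → ℝ := fun t => Real.exp (-(t ^ 2) / 2) / Real.sqrt (2 * Real.pi) with hφ
  set g : ℝ → ℝ := fun u =>
    Real.exp (-((u - m) ^ 2) / (2 * s ^ 2)) / Real.sqrt (2 * Real.pi * s ^ 2) with hg
  set τ : ℝ := Real.sqrt (1 + ξ ^ 2 * s ^ 2) with hτ
  have hτpos : 0 < τ := Real.sqrt_pos.mpr (by positivity)
  have hτsq : τ ^ 2 = 1 + ξ ^ 2 * s ^ 2 := Real.sq_sqrt (by positivity)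
  set ψ : ℝ → ℝ := fun w =>
    Real.exp (-((w - ξ * m) ^ 2) / (2 * τ ^ 2)) / Real.sqrt (2 * Real.pi * τ ^ 2) with hψ
  have hπ : (0:ℝ) < 2 * Real.pi := by positivity
  have hsπ : (0:ℝ) < Real.sqrt (2 * Real.pi) := Real.sqrt_pos.mpr hπ
  -- Step 1 : Γ (ξ u) = ∫_{w > 0} φ (ξ u - w)
  have step1 : ∀ u : ℝ, Γ (ξ * u) = ∫ w in Ioi (0:ℝ), φ (ξ * u - w) := by
    intro u
    rw [hΓ, ← aux_shift_neg φ (ξ * u)]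
  -- φ(ξu - w) as a shifted Gaussian in w
  have hφw : ∀ u w : ℝ, Real.exp (-((w - ξ * u) ^ 2) / (2 * 1)) / Real.sqrt (2 * Real.pi)
      = φ (ξ * u - w) := by
    intro u w
    rw [hφ]
    simp only
    congr 1
    rw [mul_one]
    congr 1
    ring
  have hφint : ∀ u : ℝ, Integrable (fun w => φ (ξ * u - w)) := by
    intro u
    exact ((gauss_integrable one_pos (ξ * u)).div_const _).congr
      (Filter.Eventually.of_forall fun w => hφw u w)
  have hφnorm : ∀ u : ℝ, (∫ w : ℝ, φ (ξ * u - w)) = 1 := by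
    intro u
    rw [← integral_congr_ae (Filter.Eventually.of_forall fun w => (hφw u w))]
    rw [integral_div, gauss_norm one_pos (ξ * u), mul_one, div_self hsπ.ne']
  have hφnn : ∀ t : ℝ, 0 ≤ φ t := fun t => by
    rw [hφ]; positivity
  have hgnn : ∀ u : ℝ, 0 ≤ g u := fun u => by
    rw [hg]; positivity
  have hgint : Integrable g := (gauss_integrable (by positivity : (0:ℝ) < s ^ 2) m).div_const _
  -- continuity / measurability
  have hφcont : Continuous φ := by
    rw [hφ]; fun_prop
  have hgcont : Continuous g := by
    rw [hg]; fun_prop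
  have hFcont : Continuous (Function.uncurry fun (u w : ℝ) => φ (ξ * u - w) * g u) := by
    apply Continuous.mul
    · exact hφcont.comp (by fun_prop)
    · exact hgcont.comp continuous_fst
  -- Integrability on the product space for Fubini
  have hFint : Integrable (Function.uncurry fun (u w : ℝ) => φ (ξ * u - w) * g u)
      (volume.prod (volume.restrict (Ioi (0:ℝ)))) := by
    rw [integrable_prod_iff hFcont.aestronglyMeasurable]
    constructor
    · refine Filter.Eventually.of_forall fun u => ?_
      exact ((hφint u).mul_const (g u)).restrict
    · have hb : ∀ u : ℝ, (∫ w in Ioi (0:ℝ),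
          ‖φ (ξ * u - w) * g u‖) ≤ g u := by
        intro u
        have hnorm : ∀ w : ℝ, ‖φ (ξ * u - w) * g u‖ = φ (ξ * u - w) * g u := fun w =>
          abs_of_nonneg (mul_nonneg (hφnn _) (hgnn _))
        calc (∫ w in Ioi (0:ℝ), ‖φ (ξ * u - w) * g u‖)
            = ∫ w in Ioi (0:ℝ), φ (ξ * u - w) * g u := by
              exact setIntegral_congr_fun measurableSet_Ioi fun w _ => hnorm w
          _ ≤ ∫ w : ℝ, φ (ξ * u - w) * g u := by
              refine setIntegral_le_integral ((hφint u).mul_const (g u))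
                (Filter.Eventually.of_forall fun w => mul_nonneg (hφnn _) (hgnn _))
          _ = (∫ w : ℝ, φ (ξ * u - w)) * g u := integral_mul_const _ _
          _ = g u := by rw [hφnorm u, one_mul]
      refine Integrable.mono' hgint ?_ ?_
      · exact (hFcont.aestronglyMeasurable.norm).integral_prod_right'
      · refine Filter.Eventually.of_forall fun u => ?_
        simp only [Function.uncurry_apply_pair]
        have h0 : 0 ≤ ∫ w in Ioi (0:ℝ), ‖φ (ξ * u - w) * g u‖ :=
          integral_nonneg fun w => norm_nonneg _
        rw [Real.norm_eq_abs, abs_of_nonneg h0]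
        exact hb u
  -- pointwise completing the square
  have hv0 : (0:ℝ) < s ^ 2 / τ ^ 2 := by positivity
  have pt : ∀ u w : ℝ, φ (ξ * u - w) * g u =
      Real.exp (-((u - (m + ξ * w * s ^ 2) / τ ^ 2) ^ 2) / (2 * (s ^ 2 / τ ^ 2))) /
        Real.sqrt (2 * Real.pi * (s ^ 2 / τ ^ 2)) * ψ w := by
    intro u w
    rw [hφ, hg, hψ]
    simp only
    rw [div_mul_div_comm, div_mul_div_comm, ← Real.exp_add, ← Real.exp_add,
      ← Real.sqrt_mul hπ.le, ← Real.sqrt_mul (by positivity)]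
    have hconst : 2 * Real.pi * (2 * Real.pi * s ^ 2)
        = 2 * Real.pi * (s ^ 2 / τ ^ 2) * (2 * Real.pi * τ ^ 2) := by
      field_simp
    rw [hconst]
    congr 2
    rw [hτsq]
    have h1 : (1:ℝ) + ξ ^ 2 * s ^ 2 ≠ 0 := by positivity
    field_simp
    ring
  -- inner integral after swapping
  have step4 : ∀ w : ℝ, (∫ u : ℝ, φ (ξ * u - w) * g u) = ψ w := by
    intro w
    rw [integral_congr_ae (Filter.Eventually.of_forall fun u => pt u w)]
    rw [integral_mul_const, integral_div, gauss_norm hv0, div_self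
      (Real.sqrt_pos.mpr (by positivity)).ne', one_mul]
  -- final substitution
  have hψφ : ∀ w : ℝ, ψ w = φ (ξ * m / τ - τ⁻¹ * w) * τ⁻¹ := by
    intro w
    rw [hψ, hφ]
    simp only
    have e1 : -((ξ * m / τ - τ⁻¹ * w) ^ 2) / 2 = -((w - ξ * m) ^ 2) / (2 * τ ^ 2) := by
      field_simp
      ring
    have e2 : Real.sqrt (2 * Real.pi * τ ^ 2) = Real.sqrt (2 * Real.pi) * τ := by
      rw [Real.sqrt_mul hπ.le, Real.sqrt_sq hτpos.le]
    rw [e1, e2]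
    field_simp
  have step5 : (∫ w in Ioi (0:ℝ), ψ w) = Γ (ξ * m / τ) := by
    rw [setIntegral_congr_fun measurableSet_Ioi fun w _ => hψφ w]
    rw [integral_mul_const, key_subst φ (ξ * m / τ) (inv_pos.mpr hτpos), inv_inv]
    rw [hΓ (ξ * m / τ)]
    field_simp
  calc (∫ u : ℝ, Γ (ξ * u) * g u)
      = ∫ u : ℝ, (∫ w in Ioi (0:ℝ), φ (ξ * u - w)) * g u := by
        congr 1; funext u; rw [step1 u]
    _ = ∫ u : ℝ, ∫ w in Ioi (0:ℝ), φ (ξ * u - w) * g u := by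
        congr 1; funext u; exact (integral_mul_const _ _).symm
    _ = ∫ w in Ioi (0:ℝ), ∫ u : ℝ, φ (ξ * u - w) * g u := integral_integral_swap hFint
    _ = ∫ w in Ioi (0:ℝ), ψ w := by
        exact setIntegral_congr_fun measurableSet_Ioi fun w _ => step4 w
    _ = Γ (ξ * m / τ) := step5
end
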